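/- If A is mixing and the masses ν^u_z(W^u_loc(z)) are uniformly comparable over z ∈ Σ_A (i.e., there is κ ≥ 1 with ν^u_z(W^u_loc(z))/ν^u_w(W^u_loc(w)) ≤ κ for all z,w), then for every cylinder U the probability measures Θ^m_{n,x} = Σ_{i=1}^{k_m} [ν^u_{σ^m x}(W^u_loc(y^i))/ν^u_{σ^m x}(σ^m(W^u_loc(x)))] δ_{y^i} satisfy inf_{n,m>M,x} Θ^m_{n,x}(U) > 0, i.e., the family is adapted to U. -/

import Mathlib

open MeasureTheory ENNReal

/-- The two-sided subshift of finite type determined by a 0-1 matrix `A`. -/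
def SigmaA (d : ℕ) (A : Matrix (Fin d) (Fin d) ℕ) : Type :=
  {x : ℤ → Fin d // ∀ n : ℤ, A (x n) (x (n + 1)) = 1}

instance (d : ℕ) (A : Matrix (Fin d) (Fin d) ℕ) : TopologicalSpace (SigmaA d A) :=
  instTopologicalSpaceSubtype

instance (d : ℕ) (A : Matrix (Fin d) (Fin d) ℕ) : MeasurableSpace (SigmaA d A) :=
  borel _

instance (d : ℕ) (A : Matrix (Fin d) (Fin d) ℕ) : BorelSpace (SigmaA d A) := ⟨rfl⟩

/-- The shift map on the two-sided subshift. -/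
def shiftMap (d : ℕ) (A : Matrix (Fin d) (Fin d) ℕ) : SigmaA d A → SigmaA d A :=
  fun x => ⟨fun n => x.val (n + 1), fun n => by simpa using x.property (n + 1)⟩

/-- The local unstable set `W^u_loc(x) = {y : y_n = x_n ∀ n ≤ 0}`. -/
def WuLoc (d : ℕ) (A : Matrix (Fin d) (Fin d) ℕ) (x : SigmaA d A) :
    Set (SigmaA d A) :=
  {y | ∀ n : ℤ, n ≤ 0 → y.val n = x.val n}

/-- The Marcus operator
`R_n h (x) = (1/ν^u_x(W^u_loc(x))) ∫_{W^u_loc(x)} h ∘ σ^n dν^u_x`. -/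
noncomputable def Rop (d : ℕ) (A : Matrix (Fin d) (Fin d) ℕ)
    (ν : SigmaA d A → Measure (SigmaA d A)) (n : ℕ)
    (h : SigmaA d A → ℝ) (x : SigmaA d A) : ℝ :=
  ((ν x) (WuLoc d A x)).toReal⁻¹ *
    ∫ y in WuLoc d A x, h ((shiftMap d A)^[n] y) ∂(ν x)

namespace Theta13

variable {d : ℕ} {A : Matrix (Fin d) (Fin d) ℕ}

lemma shift_val (y : SigmaA d A) (n : ℤ) : (shiftMap d A y).val n = y.val (n + 1) := rfl

lemma shift_iter_val (m : ℕ) (y : SigmaA d A) (n : ℤ) :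
    ((shiftMap d A)^[m] y).val n = y.val (n + m) := by
  induction m generalizing y n with
  | zero => simp
  | succ m ih =>
    rw [Function.iterate_succ_apply, ih (shiftMap d A y) n, shift_val]
    norm_num; ring_nf

lemma nat_mul_pos_left {a b : ℕ} (h : 0 < a * b) : 0 < a :=
  Nat.pos_of_ne_zero fun ha => by simp [ha] at h

lemma nat_mul_pos_right {a b : ℕ} (h : 0 < a * b) : 0 < b :=
  Nat.pos_of_ne_zero fun hb => by simp [hb] at h

lemma exists_path (h01 : ∀ i j, A i j = 0 ∨ A i j = 1) :
    ∀ (k : ℕ) (s t : Fin d), 0 < (A ^ k) s t →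
    ∃ q : ℕ → Fin d, q 0 = s ∧ q k = t ∧ ∀ i < k, A (q i) (q (i + 1)) = 1 := by
  intro k
  induction k with
  | zero =>
    intro s t h
    rw [pow_zero] at h
    have hst : s = t := by
      by_contra hne
      rw [Matrix.one_apply_ne hne] at h
      exact lt_irrefl 0 h
    exact ⟨fun _ => s, rfl, hst ▸ rfl, fun i hi => absurd hi (Nat.not_lt_zero i)⟩
  | succ k ih =>
    intro s t h
    rw [pow_succ, Matrix.mul_apply] at h
    have : ∃ r, 0 < (A ^ k) s r * A r t := by
      by_contra hc
      push_neg at hc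
      have : ∑ r, (A ^ k) s r * A r t = 0 :=
        Finset.sum_eq_zero fun r _ => Nat.le_zero.mp (hc r)
      omega
    obtain ⟨r, hr⟩ := this
    have h1 : 0 < (A ^ k) s r := nat_mul_pos_left hr
    have h2 : 0 < A r t := nat_mul_pos_right hr
    have h2' : A r t = 1 := (h01 r t).resolve_left (by omega)
    obtain ⟨q, hq0, hqk, hqc⟩ := ih s r h1
    refine ⟨fun i => if i ≤ k then q i else t, by simp [hq0], by simp, ?_⟩
    intro i hi
    rcases Nat.lt_or_ge i k with hik | hik
    · simp only [if_pos (Nat.le_of_lt hik), if_pos (Nat.succ_le_of_lt hik)]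
      exact hqc i hik
    · have : i = k := by omega
      subst this
      simp only [if_pos (le_refl i), if_neg (by omega : ¬ i + 1 ≤ i)]
      rw [hqk]; exact h2'

lemma exists_edge (h01 : ∀ i j, A i j = 0 ∨ A i j = 1) (M : ℕ)
    (hM : ∀ i j, 0 < (A ^ M) i j) (hne : Nonempty (SigmaA d A)) :
    ∀ s : Fin d, ∃ t, A s t = 1 := by
  intro s
  cases M with
  | zero =>
    have hsub : Subsingleton (Fin d) := by
      constructor
      intro i j
      by_contra hij
      have := hM i j
      rw [pow_zero, Matrix.one_apply_ne hij] at this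
      exact lt_irrefl 0 this
    obtain ⟨x⟩ := hne
    refine ⟨x.val 1, ?_⟩
    have h := x.property 0
    have hs : s = x.val 0 := Subsingleton.elim _ _
    rw [hs]
    have : ((0:ℤ) + 1) = 1 := by norm_num
    rw [this] at h
    exact h
  | succ M' =>
    have h := hM s s
    rw [pow_succ', Matrix.mul_apply] at h
    have : ∃ t, 0 < A s t * (A ^ M') t s := by
      by_contra hc
      push_neg at hc
      have : ∑ t, A s t * (A ^ M') t s = 0 :=
        Finset.sum_eq_zero fun r _ => Nat.le_zero.mp (hc r)
      omega
    obtain ⟨t, ht⟩ := this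
    exact ⟨t, (h01 s t).resolve_left (by have := nat_mul_pos_left ht; omega)⟩

/-- forward tail sequence starting at `s`, following the cylinder word `a` if `s = a 0`. -/
noncomputable def tl (f : Fin d → Fin d) {l : ℕ} (a : Fin (l + 1) → Fin d)
    (n : ℕ) (s : Fin d) : Fin d :=
  if s = a 0 then (if h : n ≤ l then a ⟨n, by omega⟩ else f^[n - l] (a ⟨l, by omega⟩))
  else f^[n] s

lemma tl_zero (f : Fin d → Fin d) {l : ℕ} (a : Fin (l + 1) → Fin d) (s : Fin d) :
    tl f a 0 s = s := by
  unfold tl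
  by_cases h : s = a 0
  · rw [if_pos h, dif_pos (Nat.zero_le l), Fin.mk_zero, h]
  · simp [h]

lemma tl_a (f : Fin d → Fin d) {l : ℕ} (a : Fin (l + 1) → Fin d) (n : ℕ) (hn : n ≤ l) :
    tl f a n (a 0) = a ⟨n, by omega⟩ := by
  unfold tl
  simp [hn]

lemma tl_chain (f : Fin d → Fin d) (hf : ∀ s, A s (f s) = 1) {l : ℕ}
    (a : Fin (l + 1) → Fin d) (ha : ∀ i : Fin l, A (a i.castSucc) (a i.succ) = 1)
    (n : ℕ) (s : Fin d) : A (tl f a n s) (tl f a (n + 1) s) = 1 := by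
  unfold tl
  by_cases h : s = a 0
  · simp only [if_pos h]
    by_cases h1 : n + 1 ≤ l
    · rw [dif_pos (by omega : n ≤ l), dif_pos h1]
      have := ha ⟨n, by omega⟩
      simpa [Fin.castSucc, Fin.succ, Fin.castAdd, Fin.castLE] using this
    · by_cases h2 : n ≤ l
      · have hnl : n = l := by omega
        subst hnl
        rw [dif_pos h2, dif_neg h1]
        have h3 : n + 1 - n = 1 := by omega
        rw [h3]
        simpa using hf (a ⟨n, by omega⟩)
      · rw [dif_neg h2, dif_neg (by omega : ¬ n + 1 ≤ l)]
        have : n + 1 - l = (n - l) + 1 := by omega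
        rw [this, Function.iterate_succ_apply']
        exact hf _
  · simp only [if_neg h]
    rw [Function.iterate_succ_apply']
    exact hf _


/-- a bi-infinite sequence with past `p` (at coordinates `-n`) and future `tlf` from `p 0`. -/
def mkFun (tlf : ℕ → Fin d → Fin d) (p : ℕ → Fin d) : ℤ → Fin d :=
  fun n => if n ≤ 0 then p (-n).toNat else tlf n.toNat (p 0)

lemma mkFun_mem (tlf : ℕ → Fin d → Fin d) (h0 : ∀ s, tlf 0 s = s)
    (hc : ∀ n s, A (tlf n s) (tlf (n + 1) s) = 1)
    (p : ℕ → Fin d) (hp : ∀ n, A (p (n + 1)) (p n) = 1) :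
    ∀ n : ℤ, A (mkFun tlf p n) (mkFun tlf p (n + 1)) = 1 := by
  intro n
  unfold mkFun
  rcases lt_trichotomy n 0 with hn | hn | hn
  · rw [if_pos (by omega : n ≤ 0), if_pos (by omega : n + 1 ≤ 0)]
    have h : (-n).toNat = (-(n + 1)).toNat + 1 := by omega
    rw [h]
    exact hp _
  · subst hn
    rw [if_pos (le_refl 0), if_neg (by omega : ¬ (0:ℤ) + 1 ≤ 0)]
    have h1 : ((0:ℤ) + 1).toNat = 1 := by omega
    have h2 : (-(0:ℤ)).toNat = 0 := by omega
    rw [h1, h2]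
    have := hc 0 (p 0)
    rwa [h0] at this
  · rw [if_neg (by omega : ¬ n ≤ 0), if_neg (by omega : ¬ n + 1 ≤ 0)]
    have h : (n + 1).toNat = n.toNat + 1 := by omega
    rw [h]
    exact hc _ _

lemma mem_WuLoc_mkFun (tlf : ℕ → Fin d → Fin d) (p : ℕ → Fin d)
    (hmem : ∀ n : ℤ, A (mkFun tlf p n) (mkFun tlf p (n + 1)) = 1)
    (z : SigmaA d A) :
    z ∈ WuLoc d A ⟨mkFun tlf p, hmem⟩ ↔ ∀ n : ℕ, z.val (-(n : ℤ)) = p n := by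
  constructor
  · intro hz n
    have h := hz (-(n : ℤ)) (by omega)
    rw [h]
    show mkFun tlf p (-(n:ℤ)) = p n
    unfold mkFun
    rw [if_pos (by omega : -(n:ℤ) ≤ 0)]
    congr 1
    omega
  · intro hz n hn
    obtain ⟨kk, rfl⟩ : ∃ kk : ℕ, n = -(kk : ℤ) := ⟨(-n).toNat, by omega⟩
    rw [hz kk]
    show p kk = mkFun tlf p (-(kk:ℤ))
    unfold mkFun
    rw [if_pos (by omega : -(kk:ℤ) ≤ 0)]
    congr 1
    omega

/-- the past sequence of the decomposition piece determined by the length-`m` word `w`. -/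
def pastOf (xv : ℤ → Fin d) {m : ℕ} (w : Fin m → Fin d) (n : ℕ) : Fin d :=
  if h : n < m then w ⟨m - 1 - n, by omega⟩ else xv ((m : ℤ) - n)

lemma pastOf_inj (xv : ℤ → Fin d) {m : ℕ} (w w' : Fin m → Fin d)
    (h : ∀ n, pastOf xv w n = pastOf xv w' n) : w = w' := by
  funext j
  have := h (m - 1 - (j : ℕ))
  unfold pastOf at this
  have hj : (j : ℕ) < m := j.isLt
  simp only [dif_pos (show m - 1 - (j:ℕ) < m by omega)] at this
  have hjj : m - 1 - (m - 1 - (j : ℕ)) = (j : ℕ) := by omega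
  simpa [hjj, Fin.eta] using this

end Theta13

/-- for a mixing matrix and uniformly comparable masses
`ν^u_z(W^u_loc(z))`, for every cylinder `U` the probability measures
`Θ^m_{n,x} = Σᵢ [ν^u_{σ^m x}(W^u_loc(yⁱ))/ν^u_{σ^m x}(σ^m W^u_loc(x))] δ_{yⁱ}`
(whose weights equal `ν^u_{yⁱ}(W^u_loc(yⁱ))` normalized, by quasi-invariance) can be
chosen, uniformly in `m > M` and `x`, to give `U` mass at least some `ε > 0`:
the family is adapted to `U`. -/
theorem Theta_adapted_to_cylinder
    (d : ℕ) (A : Matrix (Fin d) (Fin d) ℕ) (M : ℕ)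
    (h01 : ∀ i j, A i j = 0 ∨ A i j = 1)
    (hM : ∀ i j, 0 < (A ^ M) i j)
    (hcpt : CompactSpace (SigmaA d A)) (hne : Nonempty (SigmaA d A))
    (ν : SigmaA d A → Measure (SigmaA d A)) (φt : SigmaA d A → ℝ)
    (hφt : Continuous φt)
    (hfin : ∀ z, IsFiniteMeasure (ν z))
    (hpos : ∀ z, 0 < (ν z) (WuLoc d A z))
    (hpast : ∀ z w, w ∈ WuLoc d A z → ∃ c : ℝ≥0∞, 0 < c ∧ c ≠ ⊤ ∧ ν z = c • ν w)
    (hquasi : ∀ z, Measure.map (shiftMap d A) (ν z) =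
      ENNReal.ofReal (Real.exp (φt z)) • ν (shiftMap d A z))
    (κ : ℝ) (hκ : 1 ≤ κ)
    (hcomp : ∀ z w : SigmaA d A,
      ((ν z) (WuLoc d A z)).toReal ≤ κ * ((ν w) (WuLoc d A w)).toReal)
    (l : ℕ) (a : Fin (l + 1) → Fin d)
    (ha : ∀ i : Fin l, A (a i.castSucc) (a i.succ) = 1) :
    ∃ ε : ℝ, 0 < ε ∧ ∀ (m : ℕ), M < m → ∀ x : SigmaA d A,
      ∃ (k : ℕ) (y : Fin k → SigmaA d A),
        ((shiftMap d A)^[m] '' WuLoc d A x = ⋃ i : Fin k, WuLoc d A (y i)) ∧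
        (Pairwise fun i j : Fin k =>
          Disjoint (WuLoc d A (y i)) (WuLoc d A (y j))) ∧
        ε ≤ (∑ i : Fin k,
              Set.indicator {z : SigmaA d A | ∀ i' : Fin (l + 1), z.val (i' : ℤ) = a i'}
                (fun _ => ((ν (y i)) (WuLoc d A (y i))).toReal) (y i)) /
            (∑ i : Fin k, ((ν (y i)) (WuLoc d A (y i))).toReal) := by
  classical
  obtain ⟨x₀⟩ := hne
  have hd : 0 < d := (x₀.val 0).pos
  choose f hf using Theta13.exists_edge h01 M hM ⟨x₀⟩
  choose q hq0 hqM hqc using fun s : Fin d => Theta13.exists_path h01 M s (a 0) (hM s (a 0))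
  have hsub : M = 0 → ∀ u v : Fin d, u = v := by
    intro hM0 u v
    by_contra huv
    have := hM u v
    rw [hM0, pow_zero, Matrix.one_apply_ne huv] at this
    exact lt_irrefl 0 this
  have hmass : ∀ z : SigmaA d A, 0 < ((ν z) (WuLoc d A z)).toReal := by
    intro z
    haveI := hfin z
    exact ENNReal.toReal_pos (hpos z).ne' (measure_ne_top _ _)
  have hκ0 : (0:ℝ) < κ := lt_of_lt_of_le one_pos hκ
  have hdR : (0:ℝ) < (d:ℝ) := by exact_mod_cast hd
  refine ⟨((d:ℝ) ^ M * κ ^ 2)⁻¹, by positivity, ?_⟩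
  intro m hm x
  have hm1 : 1 ≤ m := by omega
  set Wcond : (Fin m → Fin d) → Prop :=
    fun w => ∀ n : ℕ, A (Theta13.pastOf x.val w (n + 1)) (Theta13.pastOf x.val w n) = 1
    with hWcond
  haveI : Fintype {w : Fin m → Fin d // Wcond w} := Fintype.ofFinite _
  set k := Fintype.card {w : Fin m → Fin d // Wcond w} with hk
  set e := Fintype.equivFin {w : Fin m → Fin d // Wcond w} with he
  set tlf : ℕ → Fin d → Fin d := Theta13.tl f a with htlf
  have htl0 : ∀ s, tlf 0 s = s := Theta13.tl_zero f a
  have htlc : ∀ n s, A (tlf n s) (tlf (n + 1) s) = 1 := fun n s => Theta13.tl_chain f hf a ha n s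
  set p : Fin k → ℕ → Fin d := fun i => Theta13.pastOf x.val (e.symm i).1 with hpdef
  have hpchain : ∀ i n, A (p i (n + 1)) (p i n) = 1 := fun i => (e.symm i).2
  refine ⟨k, fun i =>
    ⟨Theta13.mkFun tlf (p i), Theta13.mkFun_mem tlf htl0 htlc (p i) (hpchain i)⟩, ?_, ?_, ?_⟩
  · ext z
    simp only [Set.mem_image, Set.mem_iUnion]
    constructor
    · rintro ⟨u, hu, rfl⟩
      have hpastu : ∀ nn : ℕ,
          Theta13.pastOf x.val (fun j : Fin m => u.val ((j : ℤ) + 1)) nn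
            = u.val ((m : ℤ) - nn) := by
        intro nn
        unfold Theta13.pastOf
        by_cases h : nn < m
        · rw [dif_pos h]
          show u.val _ = _
          exact congrArg u.val (by push_cast; omega)
        · rw [dif_neg h]
          exact (hu ((m : ℤ) - nn) (by omega)).symm
      have hw : Wcond (fun j : Fin m => u.val ((j : ℤ) + 1)) := by
        intro n
        rw [hpastu, hpastu, show (((n+1 : ℕ) : ℤ)) = (n : ℤ) + 1 by push_cast; ring]
        have h1 := u.property ((m : ℤ) - ((n : ℤ) + 1))
        rwa [show (m : ℤ) - ((n : ℤ) + 1) + 1 = (m : ℤ) - n by ring] at h1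
      refine ⟨e ⟨_, hw⟩, ?_⟩
      rw [Theta13.mem_WuLoc_mkFun]
      intro n
      rw [Theta13.shift_iter_val]
      show u.val _ = Theta13.pastOf x.val (e.symm (e ⟨_, hw⟩)).1 n
      rw [Equiv.symm_apply_apply]
      rw [hpastu n]
      exact congrArg u.val (by ring)
    · rintro ⟨i, hzi⟩
      have hz := (Theta13.mem_WuLoc_mkFun tlf (p i)
        (Theta13.mkFun_mem tlf htl0 htlc (p i) (hpchain i)) z).mp hzi
      have hpx : ∀ n : ℕ, m ≤ n → p i n = x.val ((m : ℤ) - n) := by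
        intro n hn
        show Theta13.pastOf x.val (e.symm i).1 n = _
        unfold Theta13.pastOf
        rw [dif_neg (by omega)]
      have hpm : p i m = x.val 0 := by
        rw [hpx m (le_refl m)]
        norm_num
      have hprop : ∀ n : ℤ, A ((fun n : ℤ => if n ≤ 0 then x.val n else z.val (n - m)) n)
          ((fun n : ℤ => if n ≤ 0 then x.val n else z.val (n - m)) (n + 1)) = 1 := by
        intro n
        simp only []
        rcases lt_trichotomy n 0 with hn | hn | hn
        · rw [if_pos (by omega : n ≤ 0), if_pos (by omega : n + 1 ≤ 0)]
          exact x.property n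
        · subst hn
          rw [if_pos (le_refl (0:ℤ)), if_neg (by omega : ¬ (0:ℤ) + 1 ≤ 0)]
          have h1 := hz (m - 1)
          have h2 := hpchain i (m - 1)
          rw [show m - 1 + 1 = m by omega, hpm] at h2
          rw [show ((0:ℤ) + 1 - m) = -(((m - 1 : ℕ) : ℕ) : ℤ) by omega, h1]
          exact h2
        · rw [if_neg (by omega : ¬ n ≤ 0), if_neg (by omega : ¬ n + 1 ≤ 0)]
          have h3 := z.property (n - m)
          rwa [show n - (m:ℤ) + 1 = n + 1 - m by ring] at h3
      refine ⟨⟨fun n : ℤ => if n ≤ 0 then x.val n else z.val (n - m), hprop⟩, ?_, ?_⟩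
      · intro n hn
        show (if n ≤ 0 then x.val n else z.val (n - m)) = x.val n
        rw [if_pos hn]
      · apply Subtype.ext
        funext n
        refine (Theta13.shift_iter_val m _ n).trans ?_
        show (if n + (m:ℤ) ≤ 0 then x.val (n + m) else z.val (n + m - m)) = z.val n
        by_cases hnm : n + (m:ℤ) ≤ 0
        · rw [if_pos hnm]
          have h1 := hz ((-n).toNat)
          rw [show -((((-n).toNat : ℕ)) : ℤ) = n by omega] at h1
          rw [hpx ((-n).toNat) (by omega),
            show (m:ℤ) - (((-n).toNat : ℕ) : ℤ) = n + m by omega] at h1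
          exact h1.symm
        · rw [if_neg hnm, show n + (m:ℤ) - m = n by ring]
  · intro i j hij
    rw [Set.disjoint_left]
    intro z hzi hzj
    have h1 := (Theta13.mem_WuLoc_mkFun tlf (p i)
      (Theta13.mkFun_mem tlf htl0 htlc (p i) (hpchain i)) z).mp hzi
    have h2 := (Theta13.mem_WuLoc_mkFun tlf (p j)
      (Theta13.mkFun_mem tlf htl0 htlc (p j) (hpchain j)) z).mp hzj
    have hw : (e.symm i).1 = (e.symm j).1 :=
      Theta13.pastOf_inj x.val _ _ (fun n => (h1 n).symm.trans (h2 n))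
    exact hij (e.symm.injective (Subtype.ext hw))
  · -- the cylinder bound
    have hyU : ∀ i : Fin k, p i 0 = a 0 →
        (⟨Theta13.mkFun tlf (p i), Theta13.mkFun_mem tlf htl0 htlc (p i) (hpchain i)⟩ :
          SigmaA d A) ∈
          {z : SigmaA d A | ∀ i' : Fin (l + 1), z.val (i' : ℤ) = a i'} := by
      intro i hpi i'
      show Theta13.mkFun tlf (p i) ((i' : ℤ)) = a i'
      unfold Theta13.mkFun
      by_cases h0 : (i' : ℕ) = 0
      · rw [if_pos (by omega : ((i' : ℕ) : ℤ) ≤ 0)]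
        have hz : i' = 0 := Fin.ext (by simpa using h0)
        rw [show ((-((i' : ℕ) : ℤ)).toNat) = 0 by omega, hpi, hz]
      · rw [if_neg (by omega : ¬ ((i' : ℕ) : ℤ) ≤ 0)]
        rw [show (((i' : ℕ) : ℤ)).toNat = (i' : ℕ) by omega, hpi, htlf,
          Theta13.tl_a f a (i' : ℕ) (by omega : (i' : ℕ) ≤ l)]
    set G : Finset (Fin k) := Finset.univ.filter (fun i => p i 0 = a 0) with hG
    set Fw : (Fin m → Fin d) → (Fin m → Fin d) := fun w j =>
      if (j : ℕ) < m - M then w j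
      else q (w ⟨m - M - 1, by omega⟩) ((j : ℕ) - (m - M - 1)) with hFw
    have hFa : ∀ (w : Fin m → Fin d) (n : ℕ), M ≤ n →
        Theta13.pastOf x.val (Fw w) n = Theta13.pastOf x.val w n := by
      intro w n hn
      unfold Theta13.pastOf
      by_cases h : n < m
      · rw [dif_pos h, dif_pos h]
        simp only [hFw]
        rw [if_pos (show ((⟨m - 1 - n, by omega⟩ : Fin m) : ℕ) < m - M by
          show m - 1 - n < m - M; omega)]
      · rw [dif_neg h, dif_neg h]
    have hFb : ∀ (w : Fin m → Fin d) (n : ℕ), n < M →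
        Theta13.pastOf x.val (Fw w) n = q (w ⟨m - M - 1, by omega⟩) (M - n) := by
      intro w n hn
      unfold Theta13.pastOf
      rw [dif_pos (by omega : n < m)]
      simp only [hFw]
      rw [if_neg (show ¬ ((⟨m - 1 - n, by omega⟩ : Fin m) : ℕ) < m - M by
        show ¬ m - 1 - n < m - M; omega)]
      exact congrArg _ (by show m - 1 - n - (m - M - 1) = M - n; omega)
    have hFcond : ∀ w : Fin m → Fin d, Wcond w → Wcond (Fw w) := by
      intro w hw n
      rcases lt_trichotomy (n + 1) M with h1 | h1 | h1
      · rw [hFb w (n + 1) h1, hFb w n (by omega)]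
        have h2 := hqc (w ⟨m - M - 1, by omega⟩) (M - (n + 1)) (by omega)
        rwa [show M - (n + 1) + 1 = M - n by omega] at h2
      · rw [hFa w (n + 1) (by omega), hFb w n (by omega)]
        have hpm : Theta13.pastOf x.val w (n + 1) = w ⟨m - M - 1, by omega⟩ := by
          unfold Theta13.pastOf
          rw [dif_pos (by omega : n + 1 < m)]
          exact congrArg w (Fin.ext (by show m - 1 - (n + 1) = m - M - 1; omega))
        rw [hpm, show M - n = 0 + 1 by omega]
        have h2 := hqc (w ⟨m - M - 1, by omega⟩) 0 (by omega)
        rwa [hq0] at h2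
      · rw [hFa w (n + 1) (by omega), hFa w n (by omega)]
        exact hw n
    have hFgood : ∀ w : Fin m → Fin d, Theta13.pastOf x.val (Fw w) 0 = a 0 := by
      intro w
      rcases Nat.eq_zero_or_pos M with hM0 | hM0
      · exact hsub hM0 _ _
      · rw [hFb w 0 hM0, Nat.sub_zero, hqM]
    -- a base admissible word
    have hwb : Wcond (fun j : Fin m => f^[(j : ℕ) + 1] (x.val 0)) := by
      intro n
      have hval : ∀ nn : ℕ, nn < m →
          Theta13.pastOf x.val (fun j : Fin m => f^[(j : ℕ) + 1] (x.val 0)) nn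
            = f^[m - nn] (x.val 0) := by
        intro nn hnn
        unfold Theta13.pastOf
        rw [dif_pos hnn]
        show f^[((⟨m - 1 - nn, by omega⟩ : Fin m) : ℕ) + 1] (x.val 0) = _
        exact congrArg (fun t => f^[t] (x.val 0)) (by show m - 1 - nn + 1 = m - nn; omega)
      have hvx : ∀ nn : ℕ, m ≤ nn →
          Theta13.pastOf x.val (fun j : Fin m => f^[(j : ℕ) + 1] (x.val 0)) nn
            = x.val ((m : ℤ) - nn) := by
        intro nn hnn
        unfold Theta13.pastOf
        rw [dif_neg (by omega)]
      rcases lt_trichotomy (n + 1) m with h1 | h1 | h1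
      · rw [hval (n + 1) h1, hval n (by omega),
          show m - n = (m - (n + 1)) + 1 by omega, Function.iterate_succ_apply']
        exact hf _
      · rw [hvx (n + 1) (by omega), hval n (by omega),
          show (m : ℤ) - ((n + 1 : ℕ) : ℤ) = 0 by omega,
          show m - n = 1 by omega]
        simpa using hf (x.val 0)
      · rw [hvx (n + 1) (by omega), hvx n (by omega)]
        have h3 := x.property ((m : ℤ) - ((n + 1 : ℕ) : ℤ))
        rwa [show (m : ℤ) - ((n + 1 : ℕ) : ℤ) + 1 = (m : ℤ) - (n : ℕ) by push_cast; ring]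
          at h3
    set i0 : Fin k := e ⟨Fw _, hFcond _ hwb⟩ with hi0
    have hi0G : i0 ∈ G := by
      rw [hG, Finset.mem_filter]
      refine ⟨Finset.mem_univ _, ?_⟩
      show Theta13.pastOf x.val (e.symm i0).1 0 = a 0
      rw [hi0, Equiv.symm_apply_apply]
      exact hFgood (fun j : Fin m => f^[(j : ℕ) + 1] (x.val 0))
    have hcard : k ≤ G.card * d ^ M := by
      have hle := Finset.card_le_card_of_injOn
        (f := fun w : {w : Fin m → Fin d // Wcond w} =>
          ((e ⟨Fw w.1, hFcond w.1 w.2⟩ : Fin k),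
            (fun j : Fin M => w.1 ⟨m - M + (j : ℕ), by omega⟩)))
        (s := Finset.univ) (t := G ×ˢ Finset.univ) ?_ ?_
      · rwa [Finset.card_univ, Finset.card_product, Finset.card_univ, Fintype.card_fun,
          Fintype.card_fin, Fintype.card_fin] at hle
      · intro w _
        rw [Finset.mem_coe, Finset.mem_product]
        refine ⟨?_, Finset.mem_univ _⟩
        rw [hG, Finset.mem_filter]
        refine ⟨Finset.mem_univ _, ?_⟩
        show Theta13.pastOf x.val (e.symm (e ⟨Fw w.1, hFcond w.1 w.2⟩)).1 0 = a 0
        rw [Equiv.symm_apply_apply]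
        exact hFgood _
      · intro w1 _ w2 _ heq
        obtain ⟨hfst, hsnd⟩ := Prod.mk.injEq .. ▸ heq
        have hF : Fw w1.1 = Fw w2.1 :=
          congrArg Subtype.val (e.injective hfst)
        apply Subtype.ext
        funext j
        by_cases hj : (j : ℕ) < m - M
        · have h4 := congrFun hF j
          simp only [hFw] at h4
          rwa [if_pos hj, if_pos hj] at h4
        · have h4 := congrFun hsnd ⟨(j : ℕ) - (m - M), by omega⟩
          have hidx : (⟨m - M + ((⟨(j : ℕ) - (m - M), by omega⟩ : Fin M) : ℕ), by omega⟩ :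
              Fin m) = j := Fin.ext (by show m - M + ((j : ℕ) - (m - M)) = (j : ℕ); omega)
          rwa [hidx] at h4
    -- masses
    set μ : Fin k → ℝ := fun i =>
      ((ν (⟨Theta13.mkFun tlf (p i), Theta13.mkFun_mem tlf htl0 htlc (p i) (hpchain i)⟩ :
        SigmaA d A))
        (WuLoc d A (⟨Theta13.mkFun tlf (p i),
          Theta13.mkFun_mem tlf htl0 htlc (p i) (hpchain i)⟩ : SigmaA d A))).toReal with hμ
    have hμpos : ∀ i, 0 < μ i := fun i => hmass _
    have hDle : ∑ i : Fin k, μ i ≤ (k : ℝ) * (κ * μ i0) := by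
      have h5 := Finset.sum_le_card_nsmul Finset.univ μ (κ * μ i0) (fun i _ => hcomp _ _)
      rwa [Finset.card_univ, Fintype.card_fin, nsmul_eq_mul] at h5
    have hDpos : 0 < ∑ i : Fin k, μ i :=
      Finset.sum_pos (fun i _ => hμpos i) ⟨i0, Finset.mem_univ i0⟩
    have hNge : (G.card : ℝ) * (μ i0 / κ) ≤ ∑ i ∈ G, μ i := by
      have h5 := Finset.card_nsmul_le_sum G μ (μ i0 / κ) (fun i _ => by
        rw [div_le_iff₀ hκ0]
        calc μ i0 ≤ κ * μ i := hcomp _ _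
          _ = μ i * κ := mul_comm _ _)
      rwa [nsmul_eq_mul] at h5
    rw [le_div_iff₀ hDpos]
    have hGmem : ∀ i ∈ G, p i 0 = a 0 := by
      intro i hi
      rw [hG, Finset.mem_filter] at hi
      exact hi.2
    calc ((d:ℝ) ^ M * κ ^ 2)⁻¹ * ∑ i : Fin k, μ i
        ≤ ((d:ℝ) ^ M * κ ^ 2)⁻¹ * ((k : ℝ) * (κ * μ i0)) :=
          mul_le_mul_of_nonneg_left hDle (by positivity)
      _ ≤ ((d:ℝ) ^ M * κ ^ 2)⁻¹ * (((G.card : ℝ) * (d:ℝ) ^ M) * (κ * μ i0)) := by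
          have hcast : (k : ℝ) ≤ (G.card : ℝ) * (d:ℝ) ^ M := by exact_mod_cast hcard
          have hpr : (0:ℝ) ≤ κ * μ i0 := by positivity
          have hinv : (0:ℝ) ≤ ((d:ℝ) ^ M * κ ^ 2)⁻¹ := by positivity
          exact mul_le_mul_of_nonneg_left (mul_le_mul_of_nonneg_right hcast hpr) hinv
      _ = (G.card : ℝ) * (μ i0 / κ) := by
          field_simp
      _ ≤ ∑ i ∈ G, μ i := hNge
      _ ≤ _ := by
          calc ∑ i ∈ G, μ i
              = ∑ i ∈ G, Set.indicator
                  {z : SigmaA d A | ∀ i' : Fin (l + 1), z.val (i' : ℤ) = a i'}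
                  (fun _ => μ i)
                  (⟨Theta13.mkFun tlf (p i),
                    Theta13.mkFun_mem tlf htl0 htlc (p i) (hpchain i)⟩ : SigmaA d A) :=
                Finset.sum_congr rfl (fun i hi =>
                  (Set.indicator_of_mem (hyU i (hGmem i hi)) (fun _ => μ i)).symm)
            _ ≤ _ :=
                Finset.sum_le_sum_of_subset_of_nonneg (Finset.subset_univ G)
                  (fun i _ _ => Set.indicator_nonneg (fun _ _ => (hμpos i).le) _)
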